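/- Let K ⊆ L be an extension of finite fields. Then for every element ξ of the multiplicative group K× that generates K× (as a cyclic group), there exists an element ζ of L× that generates L× (as a cyclic group) and whose norm from L to K equals ξ. -/

import Mathlib

open Finset

-- Norm formula for finite fields:
lemma norm_formula_aux (K L : Type*) [Field K] [Field L] [Algebra K L]
    [Fintype K] [Fintype L] (x : L) :
    algebraMap K L (Algebra.norm K x) =
      x ^ (∑ i ∈ Finset.range (Module.finrank K L), Fintype.card K ^ i) := by
  classical
  set q := Fintype.card K with hq
  set n := Module.finrank K L with hn
  obtain ⟨p, hp⟩ := CharP.exists K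
  haveI : CharP K p := hp
  haveI : CharP L p := charP_of_injective_algebraMap' (A := L) K p
  obtain ⟨s, hps, hcard⟩ := FiniteField.card K p
  haveI : Fact p.Prime := ⟨hps⟩
  -- Frobenius as a K-algebra automorphism of L
  let f : L →ₐ[K] L :=
    { toRingHom := iterateFrobenius L p (s : ℕ)
      commutes' := fun a => by
        show iterateFrobenius L p (s : ℕ) (algebraMap K L a) = algebraMap K L a
        rw [iterateFrobenius_def, ← map_pow, ← hcard, FiniteField.pow_card] }
  have hf : ∀ y : L, f y = y ^ q := fun y => by
    show iterateFrobenius L p (s : ℕ) y = y ^ q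
    rw [iterateFrobenius_def, hq, hcard]
  let φ : L ≃ₐ[K] L := AlgEquiv.ofBijective f
    ((Finite.injective_iff_bijective).mp (f.toRingHom.injective))
  have hφ : ∀ (i : ℕ) (y : L), (φ ^ i) y = y ^ q ^ i := by
    intro i
    induction i with
    | zero => intro y; simp
    | succ i ih =>
      intro y
      have : (φ ^ (i+1)) y = (φ ^ i) (φ y) := by
        rw [pow_succ, AlgEquiv.mul_apply]
      rw [this]
      have hφy : φ y = y ^ q := hf y
      rw [hφy, ih, ← pow_mul, pow_succ, mul_comm]
  have hq1 : 1 < q := Fintype.one_lt_card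
  have hcardL : Fintype.card L = q ^ n := by
    rw [hq, hn, Module.card_fintype (Module.finBasis K L), Fintype.card_fin]
  -- if φ ^ t = 1 then card L ≤ q ^ t
  have key : ∀ t : ℕ, 0 < t → φ ^ t = 1 → Fintype.card L ≤ q ^ t := by
    intro t htpos ht
    have hroot : ∀ y : L, y ^ q ^ t = y := by
      intro y
      have := hφ t y
      rw [ht] at this
      simpa using this.symm
    have hqt : 1 < q ^ t := one_lt_pow₀ hq1 htpos.ne'
    set P : Polynomial L := Polynomial.X ^ (q ^ t) - Polynomial.X with hP
    have hPne : P ≠ 0 := FiniteField.X_pow_card_sub_X_ne_zero L hqt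
    have hsub : (Finset.univ : Finset L) ⊆ P.roots.toFinset := by
      intro y _
      rw [Multiset.mem_toFinset, Polynomial.mem_roots hPne]
      simp [hP, Polynomial.IsRoot, sub_eq_zero, hroot y]
    calc Fintype.card L = (Finset.univ : Finset L).card := (Finset.card_univ).symm
      _ ≤ P.roots.toFinset.card := Finset.card_le_card hsub
      _ ≤ Multiset.card P.roots := P.roots.toFinset_card_le
      _ ≤ P.natDegree := P.card_roots'
      _ ≤ q ^ t := by
        rw [hP, FiniteField.X_pow_card_sub_X_natDegree_eq L hqt]
  have hcardG : Fintype.card (L ≃ₐ[K] L) = n := by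
    rw [← Nat.card_eq_fintype_card]; exact IsGalois.card_aut_eq_finrank K L
  have hnpos : 0 < n := Module.finrank_pos
  have hordpos : 0 < orderOf φ := orderOf_pos φ
  have hord_le : n ≤ orderOf φ := by
    have hle := key (orderOf φ) hordpos (pow_orderOf_eq_one φ)
    rw [hcardL] at hle
    exact (Nat.pow_le_pow_iff_right hq1).mp hle
  have hord_dvd : orderOf φ ∣ n := hcardG ▸ orderOf_dvd_card
  have hord : orderOf φ = n := le_antisymm (Nat.le_of_dvd hnpos hord_dvd) hord_le
  have hinj : Function.Injective (fun i : Fin n => φ ^ (i : ℕ)) := by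
    intro i j hij
    exact Fin.ext (pow_injOn_Iio_orderOf (by simp [hord, i.isLt])
      (by simp [hord, j.isLt]) hij)
  have hbij : Function.Bijective (fun i : Fin n => φ ^ (i : ℕ)) :=
    (Fintype.bijective_iff_injective_and_card _).mpr
      ⟨hinj, by rw [Fintype.card_fin, hcardG]⟩
  let e : Fin n ≃ (L ≃ₐ[K] L) := Equiv.ofBijective _ hbij
  have he : ∀ i : Fin n, e i = φ ^ (i : ℕ) := fun i => rfl
  rw [Algebra.norm_eq_prod_automorphisms]
  rw [← Fintype.prod_equiv e (fun i : Fin n => x ^ q ^ (i : ℕ)) (fun σ => σ x)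
    (fun i => (hφ i x).symm)]
  rw [Fin.prod_univ_eq_prod_range (fun i => x ^ q ^ i) n, Finset.prod_pow_eq_pow_sum]

/-- From the proof of Lemma 3.3: for an extension `K ⊆ L` of finite fields, every
generator `ξ` of the cyclic group `K×` is the norm of some generator `ζ` of `L×`. -/
theorem stmt_5 (K L : Type*) [Field K] [Field L] [Algebra K L]
    [Fintype K] [Fintype L]
    (ξ : Kˣ) (hξ : ∀ x : Kˣ, x ∈ Subgroup.zpowers ξ) :
    ∃ ζ : Lˣ, (∀ y : Lˣ, y ∈ Subgroup.zpowers ζ) ∧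
      Algebra.norm K (ζ : L) = (ξ : K) := by
  classical
  set q := Fintype.card K with hq
  set n := Module.finrank K L with hn
  set m := ∑ i ∈ Finset.range n, q ^ i with hm
  have hq1 : 1 < q := Fintype.one_lt_card
  have hcardL : Fintype.card L = q ^ n := by
    rw [hq, hn, Module.card_fintype (Module.finBasis K L), Fintype.card_fin]
  have hnpos : 0 < n := Module.finrank_pos
  set NK := Fintype.card Kˣ with hNK
  set NL := Fintype.card Lˣ with hNL
  have hNKq : NK = q - 1 := by rw [hNK, Fintype.card_units, hq]
  have hNLq : NL = q ^ n - 1 := by rw [hNL, Fintype.card_units, hcardL]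
  have hqn1 : 1 ≤ q ^ n := Nat.one_le_pow _ _ (by omega)
  have hmq : m * NK = NL := by
    rw [hNKq, hNLq]
    zify [hq1.le, hqn1]
    rw [hm]
    push_cast
    exact geom_sum_mul (q : ℤ) n
  have hNKpos : 0 < NK := Fintype.card_pos
  have hNLpos : 0 < NL := Fintype.card_pos
  have hmpos : 0 < m := by
    rcases Nat.eq_zero_or_pos m with h | h
    · exfalso; rw [h, zero_mul] at hmq; omega
    · exact h
  have hdvd : NK ∣ NL := Dvd.intro_left m hmq
  haveI : NeZero NL := ⟨hNLpos.ne'⟩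
  -- the norm as a homomorphism on units, and the algebra map on units
  set N : Lˣ →* Kˣ := Units.map (Algebra.norm K : L →* K) with hNdef
  set A : Kˣ →* Lˣ := Units.map (algebraMap K L : K →* L) with hAdef
  have hAinj : Function.Injective A :=
    Units.map_injective (algebraMap K L).injective
  have hkey : ∀ u : Lˣ, A (N u) = u ^ m := by
    intro u
    ext
    push_cast [hNdef, hAdef]
    exact norm_formula_aux K L (u : L)
  -- a generator of Lˣ
  obtain ⟨g, hg⟩ := IsCyclic.exists_generator (α := Lˣ)
  have hordg : orderOf g = NL := (orderOf_eq_card_of_forall_mem_zpowers hg).trans Nat.card_eq_fintype_card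
  -- the norm of g has order NK, hence generates Kˣ
  have hordNg : orderOf (N g) = NK := by
    have h1 : orderOf (N g) = orderOf (g ^ m) := by
      rw [← orderOf_injective A hAinj (N g), hkey g]
    rw [h1, orderOf_pow, hordg, Nat.gcd_eq_right ⟨NK, hmq.symm⟩,
      ← hmq, Nat.mul_div_cancel_left _ hmpos]
  set h := N g with hh
  have hhtop : Subgroup.zpowers h = ⊤ := by
    apply Subgroup.eq_top_of_card_eq
    rw [Nat.card_zpowers, hordNg, Nat.card_eq_fintype_card]
  have hξmem : ξ ∈ Submonoid.powers h :=
    mem_powers_iff_mem_zpowers.mpr (hhtop ▸ Subgroup.mem_top ξ)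
  obtain ⟨k, hk⟩ := hξmem
  simp only [] at hk
  have hordξ : orderOf ξ = NK := (orderOf_eq_card_of_forall_mem_zpowers hξ).trans Nat.card_eq_fintype_card
  have hgcd : Nat.gcd NK k = 1 := by
    have : orderOf (h ^ k) = NK := by rw [hk, hordξ]
    rw [orderOf_pow, hordNg] at this
    have hd : Nat.gcd NK k ∣ NK := Nat.gcd_dvd_left _ _
    rcases Nat.div_eq_self.mp this with h0 | h1
    · omega
    · exact h1
  have hcop : Nat.Coprime k NK := Nat.coprime_comm.mp hgcd
  -- lift k to an exponent coprime to NL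
  obtain ⟨u', hu'⟩ := ZMod.unitsMap_surjective hdvd (ZMod.unitOfCoprime k hcop)
  set k' := ((u' : ZMod NL)).val with hk'
  have hcop' : Nat.Coprime k' NL := ZMod.val_coe_unit_coprime u'
  have hmodeq : k' ≡ k [MOD NK] := by
    have h1 : ((k' : ZMod NL) : ZMod NL) = (u' : ZMod NL) := by
      simp [hk', ZMod.natCast_val, ZMod.cast_id]
    have h2 : ((ZMod.unitsMap hdvd u' : (ZMod NK)ˣ) : ZMod NK) = (k : ZMod NK) := by
      rw [hu']; exact ZMod.coe_unitOfCoprime k hcop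
    have h3 : ((ZMod.unitsMap hdvd u' : (ZMod NK)ˣ) : ZMod NK)
        = ZMod.castHom hdvd (ZMod NK) (u' : ZMod NL) := rfl
    have h4 : (k' : ZMod NK) = (k : ZMod NK) := by
      rw [← h2, h3, ← h1, map_natCast]
    exact (ZMod.natCast_eq_natCast_iff _ _ _).mp h4
  refine ⟨g ^ k', ?_, ?_⟩
  · -- g ^ k' is a generator
    have hordζ : orderOf (g ^ k') = NL := by
      rw [orderOf_pow, hordg, Nat.Coprime.gcd_eq_one (Nat.coprime_comm.mp hcop'),
        Nat.div_one]
    have : Subgroup.zpowers (g ^ k') = ⊤ := by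
      apply Subgroup.eq_top_of_card_eq
      rw [Nat.card_zpowers, hordζ, Nat.card_eq_fintype_card]
    intro y
    rw [this]
    exact Subgroup.mem_top y
  · -- its norm is ξ
    have hNζ : N (g ^ k') = ξ := by
      rw [map_pow, ← hh]
      calc h ^ k' = h ^ k := pow_eq_pow_iff_modEq.mpr (by rw [hordNg]; exact hmodeq)
        _ = ξ := hk
    have := congrArg (Units.val) hNζ
    simpa [hNdef] using this
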